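/- Let λ ∈ ℝ, μ a measure on ℝ, and H_μ = L²(ℝ×ℝ*, μ ⊗ |η₁|⁻¹dη₁). For g ∈ L¹(ℝ²) define (Ω(g)ψ)(η₀,η₁) = ∫_{ℝ²} g(p)e^{i(p₀η₀+p₁η₁)}ψ(η₀, η₁e^{λp₀}) d²p. For g₁, g₂ ∈ L¹(ℝ²) define the twisted convolution (g₁ ⋆ g₂)(p) := ∫_{ℝ²} g₁(q)·g₂(p₀−q₀, (p₁−q₁)e^{−λq₀})·e^{−λq₀} d²q. Then g₁ ⋆ g₂ ∈ L¹(ℝ²) and Ω(g₁)∘Ω(g₂) = Ω(g₁ ⋆ g₂) as operators on H_μ. Thus the quantization map Ω is a representation of the star-product algebra of κ-Minkowski. -/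

import Mathlib

open MeasureTheory
open scoped NNReal ENNReal

/-- The dilation-invariant measure `|η₁|⁻¹dη₁` on `ℝ* = ℝ \ {0}`. -/
noncomputable def nuStar : Measure ℝ :=
  (volume.restrict ({0}ᶜ : Set ℝ)).withDensity (fun η₁ => ENNReal.ofReal |η₁|⁻¹)

/-- The measure of `H_μ = L²(ℝ×ℝ*, μ ⊗ |η₁|⁻¹dη₁)`. -/
noncomputable def Hmeas (μ : Measure ℝ) : Measure (ℝ × ℝ) := μ.prod nuStar

/-- The Weyl quantization `(Ω(g)ψ)(η₀,η₁) = ∫ g(p)e^{i(p₀η₀+p₁η₁)}ψ(η₀,η₁e^{λp₀})d²p`. -/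
noncomputable def Omega (l : ℝ) (g : ℝ × ℝ → ℂ) (ψ : ℝ × ℝ → ℂ) (η : ℝ × ℝ) : ℂ :=
  ∫ p : ℝ × ℝ, g p * Complex.exp (Complex.I * ((p.1 : ℂ) * (η.1 : ℂ) + (p.2 : ℂ) * (η.2 : ℂ)))
      * ψ (η.1, η.2 * Real.exp (l * p.1))

/-- The twisted convolution
`(g₁ ⋆ g₂)(p) = ∫ g₁(q)g₂(p₀−q₀, (p₁−q₁)e^{−λq₀})e^{−λq₀}d²q`. -/
noncomputable def tconv (l : ℝ) (g₁ g₂ : ℝ × ℝ → ℂ) (p : ℝ × ℝ) : ℂ :=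
  ∫ q : ℝ × ℝ, g₁ q * g₂ (p.1 - q.1, (p.2 - q.2) * Real.exp (-(l * q.1)))
      * (Real.exp (-(l * q.1)) : ℂ)

namespace OmegaAux

/-- scaled product measure -/
lemma prodSmul {α β : Type*} [MeasurableSpace α] [MeasurableSpace β] (μ : Measure α)
    (ν : Measure β) [SigmaFinite μ] [SigmaFinite ν] (c : ℝ≥0) :
    μ.prod ((c : ℝ≥0∞) • ν) = (c : ℝ≥0∞) • (μ.prod ν) := by
  haveI : SigmaFinite ((c : ℝ≥0∞) • ν) := by
    rw [← ENNReal.smul_def]; infer_instance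
  refine (Measure.prod_eq (μ := μ) (ν := (c : ℝ≥0∞) • ν) (μν := (c : ℝ≥0∞) • μ.prod ν)
    fun s t hs ht => ?_)
  simp only [Measure.smul_apply, Measure.prod_prod, smul_eq_mul]
  ring

lemma map_tau (a b c : ℝ) (hc : c ≠ 0) :
    Measure.map (fun p : ℝ × ℝ => (p.1 - a, (p.2 - b) * c)) (volume : Measure (ℝ × ℝ))
      = ENNReal.ofReal |c⁻¹| • (volume : Measure (ℝ × ℝ)) := by
  have h1 : Measure.map (fun x : ℝ => x - a) volume = volume :=
    (measurePreserving_sub_right volume a).map_eq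
  have h2 : Measure.map (fun y : ℝ => (y - b) * c) volume
      = ENNReal.ofReal |c⁻¹| • volume := by
    have hcomp : (fun y : ℝ => (y - b) * c) = (fun y : ℝ => y * c) ∘ (fun y : ℝ => y - b) := rfl
    rw [hcomp, ← Measure.map_map (measurable_mul_const c) (measurable_sub_const b),
      (measurePreserving_sub_right volume b).map_eq, Real.map_volume_mul_right hc]
  have hmapeq : (fun p : ℝ × ℝ => (p.1 - a, (p.2 - b) * c))
      = Prod.map (fun x : ℝ => x - a) (fun y : ℝ => (y - b) * c) := rfl
  rw [hmapeq, Measure.volume_eq_prod, ← Measure.map_prod_map _ _ (measurable_sub_const a)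
    ((measurable_sub_const b).mul_const c), h1, h2]
  have : ENNReal.ofReal |c⁻¹| = ((|c⁻¹|.toNNReal : ℝ≥0) : ℝ≥0∞) := rfl
  rw [this, prodSmul]

lemma lintegral_tau (a b c : ℝ) (hc : c ≠ 0) {h : ℝ × ℝ → ℝ≥0∞} (hm : Measurable h) :
    ∫⁻ p : ℝ × ℝ, h (p.1 - a, (p.2 - b) * c) = ENNReal.ofReal |c⁻¹| * ∫⁻ p, h p := by
  have hτ : Measurable fun p : ℝ × ℝ => (p.1 - a, (p.2 - b) * c) :=
    (measurable_fst.sub_const a).prodMk ((measurable_snd.sub_const b).mul_const c)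
  rw [← lintegral_map hm hτ, map_tau a b c hc, lintegral_smul_measure, smul_eq_mul]

lemma integral_tau (a b c : ℝ) (hc : c ≠ 0) {E : Type*} [NormedAddCommGroup E]
    [NormedSpace ℝ E] {f : ℝ × ℝ → E} (hf : AEStronglyMeasurable f volume) :
    ∫ p : ℝ × ℝ, f (p.1 - a, (p.2 - b) * c) = |c⁻¹| • ∫ p, f p := by
  have hτ : Measurable fun p : ℝ × ℝ => (p.1 - a, (p.2 - b) * c) :=
    (measurable_fst.sub_const a).prodMk ((measurable_snd.sub_const b).mul_const c)
  have hfm : AEStronglyMeasurable f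
      (Measure.map (fun p : ℝ × ℝ => (p.1 - a, (p.2 - b) * c)) volume) := by
    rw [map_tau a b c hc]
    exact hf.smul_measure _
  rw [← integral_map hτ.aemeasurable hfm, map_tau a b c hc, integral_smul_measure,
    ENNReal.toReal_ofReal (abs_nonneg _)]

lemma nuStar_eq : nuStar = volume.withDensity (fun x => ENNReal.ofReal |x|⁻¹) := by
  unfold nuStar
  congr 1
  refine Measure.restrict_eq_self_of_ae_mem ?_
  filter_upwards [measure_eq_zero_iff_ae_notMem.mp
    (show volume ({0} : Set ℝ) = 0 from Real.volume_singleton)] with x hx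
  simpa using hx

instance : SigmaFinite nuStar := by
  rw [nuStar_eq]; infer_instance

lemma map_mul_nuStar {c : ℝ} (hc : c ≠ 0) :
    Measure.map (fun x : ℝ => x * c) nuStar = nuStar := by
  rw [nuStar_eq]
  ext A hA
  rw [Measure.map_apply (measurable_mul_const c) hA, withDensity_apply _ (hA.preimage
    (measurable_mul_const c)), withDensity_apply _ hA]
  have hind : ∀ x : ℝ, ((fun x => x * c) ⁻¹' A).indicator (fun x => ENNReal.ofReal |x|⁻¹) x
      = A.indicator (fun y => ENNReal.ofReal |y * c⁻¹|⁻¹) (x * c) := by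
    intro x
    by_cases hx : x * c ∈ A
    · rw [Set.indicator_of_mem hx, Set.indicator_of_mem (by simpa using hx)]
      rw [mul_assoc, mul_inv_cancel₀ hc, mul_one]
    · rw [Set.indicator_of_notMem hx, Set.indicator_of_notMem (by simpa using hx)]
  have hmeas : Measurable (A.indicator (fun y : ℝ => ENNReal.ofReal |y * c⁻¹|⁻¹)) := by
    exact Measurable.indicator (by fun_prop) hA
  calc ∫⁻ x in (fun x => x * c) ⁻¹' A, ENNReal.ofReal |x|⁻¹ ∂volume
      = ∫⁻ x, ((fun x => x * c) ⁻¹' A).indicator (fun x => ENNReal.ofReal |x|⁻¹) x ∂volume := by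
        rw [lintegral_indicator (hA.preimage (measurable_mul_const c))]
    _ = ∫⁻ x, A.indicator (fun y => ENNReal.ofReal |y * c⁻¹|⁻¹) (x * c) ∂volume := by
        exact lintegral_congr hind
    _ = ∫⁻ y, A.indicator (fun y => ENNReal.ofReal |y * c⁻¹|⁻¹) y
          ∂(Measure.map (fun x : ℝ => x * c) volume) := by
        rw [lintegral_map hmeas (measurable_mul_const c)]
    _ = ENNReal.ofReal |c⁻¹| * ∫⁻ y, A.indicator (fun y => ENNReal.ofReal |y * c⁻¹|⁻¹) y := by
        rw [Real.map_volume_mul_right hc, lintegral_smul_measure, smul_eq_mul]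
    _ = ∫⁻ y, A.indicator (fun y => ENNReal.ofReal |y|⁻¹) y := by
        rw [← lintegral_const_mul _ hmeas]
        refine lintegral_congr fun y => ?_
        by_cases hy : y ∈ A
        · rw [Set.indicator_of_mem hy, Set.indicator_of_mem hy, ← ENNReal.ofReal_mul
            (abs_nonneg _)]
          congr 1
          have hcabs : |c| ≠ 0 := abs_ne_zero.mpr hc
          rcases eq_or_ne y 0 with rfl | hy0
          · simp
          · rw [abs_mul, abs_inv]
            field_simp
        · rw [Set.indicator_of_notMem hy, Set.indicator_of_notMem hy, mul_zero]
    _ = ∫⁻ y in A, ENNReal.ofReal |y|⁻¹ ∂volume := by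
        rw [lintegral_indicator hA]

instance (μ : Measure ℝ) [SigmaFinite μ] : SigmaFinite (Hmeas μ) := by
  unfold Hmeas; infer_instance

lemma sigmaPreserving (μ : Measure ℝ) [SigmaFinite μ] {c : ℝ} (hc : c ≠ 0) :
    MeasurePreserving (fun η : ℝ × ℝ => (η.1, η.2 * c)) (Hmeas μ) (Hmeas μ) := by
  have : (fun η : ℝ × ℝ => (η.1, η.2 * c)) = Prod.map (fun x : ℝ => x) (fun y : ℝ => y * c) :=
    rfl
  rw [this]
  exact (MeasurePreserving.id μ).prod ⟨measurable_mul_const c, map_mul_nuStar hc⟩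

end OmegaAux

namespace OmegaAux

noncomputable def eK (p η : ℝ × ℝ) : ℂ :=
  Complex.exp (Complex.I * ((p.1 : ℂ) * (η.1 : ℂ) + (p.2 : ℂ) * (η.2 : ℂ)))

noncomputable def sig (l s : ℝ) (η : ℝ × ℝ) : ℝ × ℝ := (η.1, η.2 * Real.exp (l * s))

lemma Omega_eq (l : ℝ) (g ψ : ℝ × ℝ → ℂ) (η : ℝ × ℝ) :
    Omega l g ψ η = ∫ p : ℝ × ℝ, g p * eK p η * ψ (sig l p.1 η) := rfl

lemma norm_eK (p η : ℝ × ℝ) : ‖eK p η‖ = 1 := by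
  unfold eK
  rw [Complex.norm_exp]
  have : (Complex.I * ((p.1 : ℂ) * (η.1 : ℂ) + (p.2 : ℂ) * (η.2 : ℂ))).re = 0 := by
    simp [Complex.mul_re]
  rw [this, Real.exp_zero]

lemma nnnorm_eK (p η : ℝ × ℝ) : (‖eK p η‖₊ : ℝ≥0∞) = 1 := by
  have : ‖eK p η‖₊ = 1 := by
    ext; simpa using norm_eK p η
  rw [this]; rfl

lemma sig_sig (l q r : ℝ) (η : ℝ × ℝ) : sig l r (sig l q η) = sig l (q + r) η := by
  unfold sig
  simp only [Prod.mk.injEq, true_and, mul_assoc, ← Real.exp_add, mul_add]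

lemma eK_mul (l : ℝ) (q p η : ℝ × ℝ) :
    eK q η * eK (p.1 - q.1, (p.2 - q.2) * Real.exp (-(l * q.1))) (sig l q.1 η) = eK p η := by
  unfold eK sig
  rw [← Complex.exp_add]
  congr 1
  have h : Real.exp (-(l * q.1)) * Real.exp (l * q.1) = 1 := by
    rw [← Real.exp_add]; simp
  have hC : ((Real.exp (-(l * q.1)) : ℝ) : ℂ) * ((Real.exp (l * q.1) : ℝ) : ℂ) = 1 := by
    rw [← Complex.ofReal_mul, h, Complex.ofReal_one]
  push_cast at hC ⊢
  linear_combination (Complex.I * ((p.2 : ℂ) - (q.2 : ℂ)) * (η.2 : ℂ)) * hC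

noncomputable def Fc (l : ℝ) (g₁ g₂ : ℝ × ℝ → ℂ) (z : (ℝ × ℝ) × (ℝ × ℝ)) : ℂ :=
  g₁ z.1 * g₂ (z.2.1 - z.1.1, (z.2.2 - z.1.2) * Real.exp (-(l * z.1.1)))
    * (Real.exp (-(l * z.1.1)) : ℂ)

lemma tconv_eq (l : ℝ) (g₁ g₂ : ℝ × ℝ → ℂ) (p : ℝ × ℝ) :
    tconv l g₁ g₂ p = ∫ q : ℝ × ℝ, Fc l g₁ g₂ (q, p) := rfl

lemma meas_tauz (l : ℝ) : Measurable fun z : (ℝ × ℝ) × (ℝ × ℝ) =>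
    (z.2.1 - z.1.1, (z.2.2 - z.1.2) * Real.exp (-(l * z.1.1))) := by fun_prop

lemma ae_comp_tau (l : ℝ) {s : Set (ℝ × ℝ)} (hs : (volume : Measure (ℝ × ℝ)) s = 0) :
    ∀ᵐ z : (ℝ × ℝ) × (ℝ × ℝ) ∂((volume : Measure (ℝ × ℝ)).prod volume),
      (z.2.1 - z.1.1, (z.2.2 - z.1.2) * Real.exp (-(l * z.1.1))) ∉ s := by
  set t := toMeasurable (volume : Measure (ℝ × ℝ)) s with ht_def
  have htm : MeasurableSet t := measurableSet_toMeasurable _ _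
  have ht0 : (volume : Measure (ℝ × ℝ)) t = 0 := by
    rw [ht_def, measure_toMeasurable]; exact hs
  have hTm : MeasurableSet {z : (ℝ × ℝ) × (ℝ × ℝ) |
      (z.2.1 - z.1.1, (z.2.2 - z.1.2) * Real.exp (-(l * z.1.1))) ∈ t} := meas_tauz l htm
  have hzero : ((volume : Measure (ℝ × ℝ)).prod volume) {z : (ℝ × ℝ) × (ℝ × ℝ) |
      (z.2.1 - z.1.1, (z.2.2 - z.1.2) * Real.exp (-(l * z.1.1))) ∈ t} = 0 := by
    rw [Measure.measure_prod_null hTm]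
    refine Filter.Eventually.of_forall fun q => ?_
    have hpre : Prod.mk q ⁻¹' {z : (ℝ × ℝ) × (ℝ × ℝ) |
        (z.2.1 - z.1.1, (z.2.2 - z.1.2) * Real.exp (-(l * z.1.1))) ∈ t}
        = (fun p : ℝ × ℝ => (p.1 - q.1, (p.2 - q.2) * Real.exp (-(l * q.1)))) ⁻¹' t := rfl
    have hτ : Measurable fun p : ℝ × ℝ =>
        (p.1 - q.1, (p.2 - q.2) * Real.exp (-(l * q.1))) :=
      (measurable_fst.sub_const _).prodMk ((measurable_snd.sub_const _).mul_const _)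
    simp only [Pi.zero_apply]
    rw [hpre, ← Measure.map_apply hτ htm, map_tau _ _ _ (Real.exp_ne_zero _)]
    simp [ht0]
  filter_upwards [measure_eq_zero_iff_ae_notMem.mp hzero] with z hz hmem
  exact hz (subset_toMeasurable _ _ hmem)

lemma Fc_congr (l : ℝ) {g₁ g₂ g₁' g₂' : ℝ × ℝ → ℂ}
    (h₁ : g₁ =ᵐ[(volume : Measure (ℝ × ℝ))] g₁')
    (h₂ : g₂ =ᵐ[(volume : Measure (ℝ × ℝ))] g₂') :
    Fc l g₁ g₂ =ᵐ[(volume : Measure (ℝ × ℝ)).prod volume] Fc l g₁' g₂' := by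
  have hfst : ∀ᵐ z : (ℝ × ℝ) × (ℝ × ℝ) ∂((volume : Measure (ℝ × ℝ)).prod volume),
      g₁ z.1 = g₁' z.1 := Measure.quasiMeasurePreserving_fst.ae h₁
  have hs : (volume : Measure (ℝ × ℝ)) {x | g₂ x ≠ g₂' x} = 0 := h₂
  filter_upwards [hfst, ae_comp_tau l hs] with z e1 e2
  unfold Fc
  rw [e1, not_not.mp (fun hne => e2 hne)]

lemma tconv_congr (l : ℝ) {g₁ g₂ g₁' g₂' : ℝ × ℝ → ℂ}
    (h₁ : g₁ =ᵐ[(volume : Measure (ℝ × ℝ))] g₁')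
    (h₂ : g₂ =ᵐ[(volume : Measure (ℝ × ℝ))] g₂') :
    tconv l g₁ g₂ =ᵐ[(volume : Measure (ℝ × ℝ))] tconv l g₁' g₂' := by
  have hF := Fc_congr l h₁ h₂
  have hswap : ∀ᵐ y : (ℝ × ℝ) × (ℝ × ℝ) ∂((volume : Measure (ℝ × ℝ)).prod volume),
      Fc l g₁ g₂ (Prod.swap y) = Fc l g₁' g₂' (Prod.swap y) :=
    Measure.measurePreserving_swap.quasiMeasurePreserving.ae hF
  filter_upwards [Measure.ae_ae_of_ae_prod hswap] with p hp
  rw [tconv_eq, tconv_eq]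
  exact integral_congr_ae hp

lemma Fc_integrable (l : ℝ) {g₁ g₂ : ℝ × ℝ → ℂ}
    (hg₁ : Integrable g₁ (volume : Measure (ℝ × ℝ)))
    (hg₂ : Integrable g₂ (volume : Measure (ℝ × ℝ)))
    (hs₁ : StronglyMeasurable g₁) (hs₂ : StronglyMeasurable g₂) :
    Integrable (Fc l g₁ g₂) ((volume : Measure (ℝ × ℝ)).prod volume) := by
  have hmeasF : Measurable (Fc l g₁ g₂) := by
    unfold Fc
    exact ((hs₁.measurable.comp measurable_fst).mul
      (hs₂.measurable.comp (meas_tauz l))).mul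
      (Complex.measurable_ofReal.comp (by fun_prop))
  rw [integrable_prod_iff hmeasF.stronglyMeasurable.aestronglyMeasurable]
  constructor
  · refine Filter.Eventually.of_forall fun q => ?_
    have hτ : Measurable fun p : ℝ × ℝ =>
        (p.1 - q.1, (p.2 - q.2) * Real.exp (-(l * q.1))) :=
      (measurable_fst.sub_const _).prodMk ((measurable_snd.sub_const _).mul_const _)
    have h1 : Integrable g₂ (Measure.map (fun p : ℝ × ℝ =>
        (p.1 - q.1, (p.2 - q.2) * Real.exp (-(l * q.1)))) volume) := by
      rw [map_tau _ _ _ (Real.exp_ne_zero _)]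
      exact hg₂.smul_measure ENNReal.ofReal_ne_top
    have hcomp : Integrable (fun p : ℝ × ℝ =>
        g₂ (p.1 - q.1, (p.2 - q.2) * Real.exp (-(l * q.1)))) volume :=
      (integrable_map_measure hs₂.aestronglyMeasurable hτ.aemeasurable).mp h1
    simp only [Fc]
    exact (hcomp.const_mul (g₁ q)).mul_const _
  · have heq : (fun q : ℝ × ℝ => ∫ p : ℝ × ℝ, ‖Fc l g₁ g₂ (q, p)‖)
        = fun q => ‖g₁ q‖ * ∫ x : ℝ × ℝ, ‖g₂ x‖ := by
      funext q
      have hnorm : ∀ p : ℝ × ℝ, ‖Fc l g₁ g₂ (q, p)‖ = (‖g₁ q‖ * Real.exp (-(l * q.1)))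
          * ‖g₂ (p.1 - q.1, (p.2 - q.2) * Real.exp (-(l * q.1)))‖ := by
        intro p
        unfold Fc
        rw [norm_mul, norm_mul, Complex.norm_real, Real.norm_eq_abs,
          abs_of_pos (Real.exp_pos _)]
        ring
      simp_rw [hnorm]
      rw [MeasureTheory.integral_const_mul,
        integral_tau q.1 q.2 _ (Real.exp_ne_zero (-(l * q.1)))
          hg₂.aestronglyMeasurable.norm, abs_inv, abs_of_pos (Real.exp_pos _),
        smul_eq_mul, ← Real.exp_neg]
      rw [show ‖g₁ q‖ * Real.exp (-(l * q.1)) * (Real.exp (-(-(l * q.1))) * ∫ x : ℝ × ℝ, ‖g₂ x‖)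
        = ‖g₁ q‖ * (Real.exp (-(l * q.1)) * Real.exp (-(-(l * q.1)))) * ∫ x : ℝ × ℝ, ‖g₂ x‖
        by ring, ← Real.exp_add]
      simp
    rw [heq]
    exact hg₁.norm.mul_const _

lemma tconv_integrable (l : ℝ) {g₁ g₂ : ℝ × ℝ → ℂ}
    (hg₁ : Integrable g₁ (volume : Measure (ℝ × ℝ)))
    (hg₂ : Integrable g₂ (volume : Measure (ℝ × ℝ))) :
    Integrable (tconv l g₁ g₂) (volume : Measure (ℝ × ℝ)) := by
  set G₁ := hg₁.1.mk g₁ with hG₁def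
  set G₂ := hg₂.1.mk g₂ with hG₂def
  have hG₁ : g₁ =ᵐ[(volume : Measure (ℝ × ℝ))] G₁ := hg₁.1.ae_eq_mk
  have hG₂ : g₂ =ᵐ[(volume : Measure (ℝ × ℝ))] G₂ := hg₂.1.ae_eq_mk
  have hFi := Fc_integrable l (hg₁.congr hG₁) (hg₂.congr hG₂)
    hg₁.1.stronglyMeasurable_mk hg₂.1.stronglyMeasurable_mk
  have hint : Integrable (fun p : ℝ × ℝ => ∫ q : ℝ × ℝ, Fc l G₁ G₂ (q, p) ∂volume)
      (volume : Measure (ℝ × ℝ)) := hFi.integral_prod_right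
  exact hint.congr ((tconv_congr l hG₁.symm hG₂.symm).mono fun p hp => by
    rw [← hp]; rfl)

lemma ML (l : ℝ) (μ : Measure ℝ) [SigmaFinite μ] {N : Set (ℝ × ℝ)}
    (hNm : MeasurableSet N) (hN0 : Hmeas μ N = 0) :
    ∀ᵐ η ∂Hmeas μ, ∀ᵐ p : ℝ × ℝ ∂(volume : Measure (ℝ × ℝ)), sig l p.1 η ∉ N := by
  have hmap : Measurable fun y : (ℝ × ℝ) × (ℝ × ℝ) => sig l y.1.1 y.2 := by
    unfold sig; fun_prop
  have hmap2 : Measurable fun x : (ℝ × ℝ) × (ℝ × ℝ) => sig l x.2.1 x.1 := by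
    unfold sig; fun_prop
  have hT'm : MeasurableSet {y : (ℝ × ℝ) × (ℝ × ℝ) | sig l y.1.1 y.2 ∈ N} := hmap hNm
  have h0 : ((volume : Measure (ℝ × ℝ)).prod (Hmeas μ))
      {y : (ℝ × ℝ) × (ℝ × ℝ) | sig l y.1.1 y.2 ∈ N} = 0 := by
    rw [Measure.measure_prod_null hT'm]
    refine Filter.Eventually.of_forall fun p => ?_
    have hpre : Prod.mk p ⁻¹' {y : (ℝ × ℝ) × (ℝ × ℝ) | sig l y.1.1 y.2 ∈ N}
        = (fun η : ℝ × ℝ => (η.1, η.2 * Real.exp (l * p.1))) ⁻¹' N := rfl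
    simp only [Pi.zero_apply]
    rw [hpre, (sigmaPreserving μ (Real.exp_ne_zero (l * p.1))).measure_preimage
      hNm.nullMeasurableSet]
    exact hN0
  have h0' : ((Hmeas μ).prod (volume : Measure (ℝ × ℝ)))
      {x : (ℝ × ℝ) × (ℝ × ℝ) | sig l x.2.1 x.1 ∈ N} = 0 := by
    have hsw : {x : (ℝ × ℝ) × (ℝ × ℝ) | sig l x.2.1 x.1 ∈ N}
        = Prod.swap ⁻¹' {y : (ℝ × ℝ) × (ℝ × ℝ) | sig l y.1.1 y.2 ∈ N} := rfl
    rw [hsw]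
    rw [Measure.measurePreserving_swap.measure_preimage hT'm.nullMeasurableSet]
    exact h0
  have h2 := Measure.ae_ae_of_ae_prod (measure_eq_zero_iff_ae_notMem.mp h0')
  filter_upwards [h2] with η hη
  filter_upwards [hη] with p hp
  exact hp

lemma badset (l : ℝ) (μ : Measure ℝ) [SigmaFinite μ] {N : Set (ℝ × ℝ)}
    (hNm : MeasurableSet N) (hN0 : Hmeas μ N = 0) :
    ∃ B : Set (ℝ × ℝ), MeasurableSet B ∧ Hmeas μ B = 0 ∧
      ∀ ζ : ℝ × ℝ, ζ ∉ B → ∀ᵐ p : ℝ × ℝ ∂(volume : Measure (ℝ × ℝ)), sig l p.1 ζ ∉ N := by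
  have hind : Measurable fun x : (ℝ × ℝ) × (ℝ × ℝ) =>
      N.indicator (fun _ => (1 : ℝ≥0∞)) (sig l x.2.1 x.1) :=
    (measurable_const.indicator hNm).comp (by unfold sig; fun_prop)
  set f : ℝ × ℝ → ℝ≥0∞ := fun ζ => ∫⁻ p : ℝ × ℝ,
    N.indicator (fun _ => (1 : ℝ≥0∞)) (sig l p.1 ζ) ∂volume with hfdef
  have hmf : Measurable f := by
    apply Measurable.lintegral_prod_right' (f := fun x : (ℝ × ℝ) × (ℝ × ℝ) =>
      N.indicator (fun _ => (1 : ℝ≥0∞)) (sig l x.2.1 x.1)) hind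
  refine ⟨{ζ | f ζ ≠ 0}, hmf (measurableSet_singleton 0).compl, ?_, ?_⟩
  · refine measure_eq_zero_iff_ae_notMem.mpr ?_
    filter_upwards [ML l μ hNm hN0] with ζ hζ
    have hz : ∀ᵐ p : ℝ × ℝ ∂(volume : Measure (ℝ × ℝ)),
        N.indicator (fun _ => (1 : ℝ≥0∞)) (sig l p.1 ζ) = 0 :=
      hζ.mono fun p hp => Set.indicator_of_notMem hp _
    have : f ζ = 0 := by
      rw [hfdef]
      simp only []
      rw [lintegral_congr_ae hz, lintegral_zero]
    simpa using this
  · intro ζ hζ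
    have hfz : f ζ = 0 := not_not.mp (fun h => hζ h)
    have hminner : Measurable fun p : ℝ × ℝ =>
        N.indicator (fun _ => (1 : ℝ≥0∞)) (sig l p.1 ζ) :=
      (measurable_const.indicator hNm).comp (by unfold sig; fun_prop)
    filter_upwards [(lintegral_eq_zero_iff hminner).mp hfz] with p hp hmem
    rw [Set.indicator_of_mem hmem] at hp
    exact one_ne_zero hp

end OmegaAux

namespace OmegaAux

lemma nnnorm_eK' (p η : ℝ × ℝ) : ‖eK p η‖₊ = 1 := by
  ext; simpa using norm_eK p η

lemma enorm_exp_coe (c : ℝ) (hc : 0 ≤ c) : (‖((c : ℝ) : ℂ)‖₊ : ℝ≥0∞) = ENNReal.ofReal c := by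
  have h1 : ‖((c : ℝ) : ℂ)‖₊ = ‖c‖₊ := by ext; simp [Complex.norm_real]
  rw [h1]; exact Real.enorm_eq_ofReal hc

lemma core (l : ℝ) (μ : Measure ℝ) [SigmaFinite μ] {g₁ g₂ ψ : ℝ × ℝ → ℂ}
    (hg₁ : Integrable g₁ (volume : Measure (ℝ × ℝ)))
    (hg₂ : Integrable g₂ (volume : Measure (ℝ × ℝ)))
    (hs₁ : StronglyMeasurable g₁) (hs₂ : StronglyMeasurable g₂)
    (hsψ : StronglyMeasurable ψ) (hψ : MemLp ψ 2 (Hmeas μ)) :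
    Omega l g₁ (Omega l g₂ ψ) =ᵐ[Hmeas μ] Omega l (tconv l g₁ g₂) ψ := by
  set M : ℝ × ℝ → ℝ≥0∞ := fun η => ∫⁻ z : (ℝ × ℝ) × (ℝ × ℝ),
      (‖g₁ z.1‖₊ : ℝ≥0∞) * (‖g₂ z.2‖₊ : ℝ≥0∞) *
        (‖ψ (sig l (z.1.1 + z.2.1) η)‖₊ : ℝ≥0∞)
      ∂((volume : Measure (ℝ × ℝ)).prod volume) with hMdef
  have hjoint : Measurable fun x : (ℝ × ℝ) × ((ℝ × ℝ) × (ℝ × ℝ)) =>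
      (‖g₁ x.2.1‖₊ : ℝ≥0∞) * (‖g₂ x.2.2‖₊ : ℝ≥0∞) *
        (‖ψ (sig l (x.2.1.1 + x.2.2.1) x.1)‖₊ : ℝ≥0∞) := by
    refine Measurable.fun_mul (Measurable.fun_mul ?_ ?_) ?_
    · exact (hs₁.measurable.comp (measurable_snd.fst)).nnnorm.coe_nnreal_ennreal
    · exact (hs₂.measurable.comp (measurable_snd.snd)).nnnorm.coe_nnreal_ennreal
    · refine ((hsψ.measurable.comp ?_).nnnorm).coe_nnreal_ennreal
      unfold sig; fun_prop
  have hMmeas : Measurable M := hjoint.lintegral_prod_right'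
  obtain ⟨w, hwpos, hwmeas, hwint⟩ :=
    exists_pos_lintegral_lt_of_sigmaFinite (Hmeas μ) (one_ne_zero)
  set W : ℝ × ℝ → ℝ≥0∞ := fun η => min (w η : ℝ≥0∞) 1 with hWdef
  have hWmeas : Measurable W := (hwmeas.coe_nnreal_ennreal).min measurable_const
  have hWle1 : ∀ η, W η ≤ 1 := fun η => min_le_right _ _
  have hWposn : ∀ η, W η ≠ 0 := by
    intro η
    have : 0 < W η := lt_min (ENNReal.coe_pos.mpr (hwpos η)) zero_lt_one
    exact this.ne'
  have h22 : Real.HolderConjugate 2 2 := Real.HolderConjugate.two_two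
  have hψ2 : ∫⁻ ζ, (‖ψ ζ‖₊ : ℝ≥0∞) ^ (2 : ℝ) ∂Hmeas μ < ∞ := by
    have h := hψ.2
    rw [eLpNorm_eq_lintegral_rpow_enorm_toReal (by norm_num) (by norm_num)] at h
    simp only [ENNReal.toReal_ofNat] at h
    exact (ENNReal.rpow_lt_top_iff_of_pos (by norm_num : (0:ℝ) < 1/2)).mp h
  set Cψ : ℝ≥0∞ := (∫⁻ ζ, (‖ψ ζ‖₊ : ℝ≥0∞) ^ (2 : ℝ) ∂Hmeas μ) ^ (1/(2:ℝ)) with hCψdef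
  set CW : ℝ≥0∞ := (∫⁻ η, W η ^ (2 : ℝ) ∂Hmeas μ) ^ (1/(2:ℝ)) with hCWdef
  have hCψtop : Cψ ≠ ∞ := (ENNReal.rpow_lt_top_of_nonneg (by norm_num) hψ2.ne).ne
  have hCWtop : CW ≠ ∞ := by
    refine (ENNReal.rpow_lt_top_of_nonneg (by norm_num) ?_).ne
    have h1 : ∫⁻ η, W η ^ (2:ℝ) ∂Hmeas μ ≤ ∫⁻ η, W η ∂Hmeas μ :=
      lintegral_mono fun η => ENNReal.rpow_le_self_of_le_one (hWle1 η) one_le_two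
    have h2 : ∫⁻ η, W η ∂Hmeas μ ≤ ∫⁻ η, (w η : ℝ≥0∞) ∂Hmeas μ :=
      lintegral_mono fun η => min_le_left _ _
    exact ((h1.trans h2).trans_lt hwint).trans_le le_top |>.ne
  have hmψs : ∀ s : ℝ, Measurable fun η : ℝ × ℝ => (‖ψ (sig l s η)‖₊ : ℝ≥0∞) := by
    intro s
    refine ((hsψ.measurable.comp ?_).nnnorm).coe_nnreal_ennreal
    unfold sig; fun_prop
  have hinner : ∀ s : ℝ, ∫⁻ η, W η * (‖ψ (sig l s η)‖₊ : ℝ≥0∞) ∂Hmeas μ ≤ CW * Cψ := by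
    intro s
    have hH := ENNReal.lintegral_mul_le_Lp_mul_Lq (Hmeas μ) h22 hWmeas.aemeasurable
      (hmψs s).aemeasurable
    simp only [Pi.mul_apply] at hH
    have hcomp : ∫⁻ η, ((‖ψ (sig l s η)‖₊ : ℝ≥0∞)) ^ (2:ℝ) ∂Hmeas μ
        = ∫⁻ ζ, (‖ψ ζ‖₊ : ℝ≥0∞) ^ (2:ℝ) ∂Hmeas μ := by
      exact (sigmaPreserving μ (Real.exp_ne_zero (l * s))).lintegral_comp
        ((hsψ.measurable.nnnorm.coe_nnreal_ennreal).pow_const _)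
    rw [hcomp] at hH
    exact hH.trans (le_of_eq rfl)
  have hWM : ∫⁻ η, W η * M η ∂Hmeas μ
      ≤ (∫⁻ x : ℝ × ℝ, (‖g₁ x‖₊ : ℝ≥0∞) ∂volume) * (∫⁻ x : ℝ × ℝ, (‖g₂ x‖₊ : ℝ≥0∞) ∂volume)
        * (CW * Cψ) := by
    have hswap : ∫⁻ η, W η * M η ∂Hmeas μ
        = ∫⁻ z : (ℝ × ℝ) × (ℝ × ℝ), ((‖g₁ z.1‖₊ : ℝ≥0∞) * (‖g₂ z.2‖₊ : ℝ≥0∞)) *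
            (∫⁻ η, W η * (‖ψ (sig l (z.1.1 + z.2.1) η)‖₊ : ℝ≥0∞) ∂Hmeas μ)
          ∂((volume : Measure (ℝ × ℝ)).prod volume) := by
      calc ∫⁻ η, W η * M η ∂Hmeas μ
          = ∫⁻ η, ∫⁻ z : (ℝ × ℝ) × (ℝ × ℝ), W η * ((‖g₁ z.1‖₊ : ℝ≥0∞) * (‖g₂ z.2‖₊ : ℝ≥0∞)
              * (‖ψ (sig l (z.1.1 + z.2.1) η)‖₊ : ℝ≥0∞))
              ∂((volume : Measure (ℝ × ℝ)).prod volume) ∂Hmeas μ := by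
            refine lintegral_congr fun η => ?_
            rw [hMdef]
            exact (lintegral_const_mul (W η) (hjoint.comp measurable_prodMk_left)).symm
        _ = ∫⁻ z : (ℝ × ℝ) × (ℝ × ℝ), ∫⁻ η, W η * ((‖g₁ z.1‖₊ : ℝ≥0∞) * (‖g₂ z.2‖₊ : ℝ≥0∞)
              * (‖ψ (sig l (z.1.1 + z.2.1) η)‖₊ : ℝ≥0∞)) ∂Hmeas μ
              ∂((volume : Measure (ℝ × ℝ)).prod volume) := by
            exact lintegral_lintegral_swap (((hWmeas.comp measurable_fst).mul hjoint).aemeasurable)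
        _ = ∫⁻ z : (ℝ × ℝ) × (ℝ × ℝ), ((‖g₁ z.1‖₊ : ℝ≥0∞) * (‖g₂ z.2‖₊ : ℝ≥0∞)) *
            (∫⁻ η, W η * (‖ψ (sig l (z.1.1 + z.2.1) η)‖₊ : ℝ≥0∞) ∂Hmeas μ)
            ∂((volume : Measure (ℝ × ℝ)).prod volume) := by
            refine lintegral_congr fun z => ?_
            rw [← lintegral_const_mul _ (hWmeas.fun_mul (hmψs _))]
            refine lintegral_congr fun η => ?_
            ring
    rw [hswap]
    calc ∫⁻ z : (ℝ × ℝ) × (ℝ × ℝ), ((‖g₁ z.1‖₊ : ℝ≥0∞) * (‖g₂ z.2‖₊ : ℝ≥0∞)) *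
            (∫⁻ η, W η * (‖ψ (sig l (z.1.1 + z.2.1) η)‖₊ : ℝ≥0∞) ∂Hmeas μ)
            ∂((volume : Measure (ℝ × ℝ)).prod volume)
        ≤ ∫⁻ z : (ℝ × ℝ) × (ℝ × ℝ), ((‖g₁ z.1‖₊ : ℝ≥0∞) * (‖g₂ z.2‖₊ : ℝ≥0∞)) * (CW * Cψ)
            ∂((volume : Measure (ℝ × ℝ)).prod volume) :=
          lintegral_mono fun z => mul_le_mul_right (hinner _) _
      _ = (∫⁻ z : (ℝ × ℝ) × (ℝ × ℝ), (‖g₁ z.1‖₊ : ℝ≥0∞) * (‖g₂ z.2‖₊ : ℝ≥0∞)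
            ∂((volume : Measure (ℝ × ℝ)).prod volume)) * (CW * Cψ) := by
          exact lintegral_mul_const' _ _ (by
            exact ENNReal.mul_ne_top hCWtop hCψtop) |>.symm ▸ rfl
      _ = (∫⁻ x : ℝ × ℝ, (‖g₁ x‖₊ : ℝ≥0∞) ∂volume) * (∫⁻ x : ℝ × ℝ, (‖g₂ x‖₊ : ℝ≥0∞) ∂volume)
            * (CW * Cψ) := by
          rw [lintegral_prod_mul (hs₁.measurable.nnnorm.coe_nnreal_ennreal.aemeasurable)
            (hs₂.measurable.nnnorm.coe_nnreal_ennreal.aemeasurable)]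
  have hfin : ∫⁻ η, W η * M η ∂Hmeas μ ≠ ∞ := by
    refine (hWM.trans_lt ?_).ne
    have h1 : (∫⁻ x : ℝ × ℝ, (‖g₁ x‖₊ : ℝ≥0∞) ∂volume) ≠ ∞ :=
      (show (∫⁻ x : ℝ × ℝ, (‖g₁ x‖₊ : ℝ≥0∞) ∂volume) < ∞ from hg₁.2).ne
    have h2 : (∫⁻ x : ℝ × ℝ, (‖g₂ x‖₊ : ℝ≥0∞) ∂volume) ≠ ∞ :=
      (show (∫⁻ x : ℝ × ℝ, (‖g₂ x‖₊ : ℝ≥0∞) ∂volume) < ∞ from hg₂.2).ne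
    exact ENNReal.mul_lt_top (ENNReal.mul_lt_top h1.lt_top h2.lt_top)
      (ENNReal.mul_lt_top hCWtop.lt_top hCψtop.lt_top)
  have haefin : ∀ᵐ η ∂Hmeas μ, M η < ∞ := by
    filter_upwards [ae_lt_top (hWmeas.mul hMmeas) hfin] with η hη
    by_contra htop
    rw [not_lt, top_le_iff] at htop
    rw [Pi.mul_apply, htop, ENNReal.mul_top (hWposn η)] at hη
    exact lt_irrefl _ hη
  -- pointwise part
  filter_upwards [haefin] with η hMη
  set G : (ℝ × ℝ) × (ℝ × ℝ) → ℂ := fun z => g₁ z.1 * eK z.1 η *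
      (g₂ z.2 * eK z.2 (sig l z.1.1 η) * ψ (sig l (z.1.1 + z.2.1) η)) with hGdef
  set H : (ℝ × ℝ) × (ℝ × ℝ) → ℂ := fun z => Fc l g₁ g₂ z *
      (eK z.2 η * ψ (sig l z.2.1 η)) with hHdef
  have hmeK : ∀ (η' : ℝ × ℝ), Measurable fun p : ℝ × ℝ => eK p η' := by
    intro η'; unfold eK
    fun_prop
  have hmeK2 : Measurable fun z : (ℝ × ℝ) × (ℝ × ℝ) => eK z.2 (sig l z.1.1 η) := by
    unfold eK sig
    fun_prop
  have hGmeas : Measurable G := by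
    rw [hGdef]
    refine (((hs₁.measurable.comp measurable_fst)).mul
      ((hmeK η).comp measurable_fst)).mul
      ((((hs₂.measurable.comp measurable_snd)).mul hmeK2).mul
        (hsψ.measurable.comp (by unfold sig; fun_prop)))
  have hHmeas : Measurable H := by
    rw [hHdef]
    have hFm : Measurable (Fc l g₁ g₂) := by
      unfold Fc
      exact ((hs₁.measurable.comp measurable_fst).mul
        (hs₂.measurable.comp (meas_tauz l))).mul
        (Complex.measurable_ofReal.comp (by fun_prop))
    exact hFm.mul (((hmeK η).comp measurable_snd).mul
      (hsψ.measurable.comp (by unfold sig; fun_prop)))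
  have hGnorm : ∀ z : (ℝ × ℝ) × (ℝ × ℝ), (‖G z‖₊ : ℝ≥0∞)
      = (‖g₁ z.1‖₊ : ℝ≥0∞) * (‖g₂ z.2‖₊ : ℝ≥0∞) *
        (‖ψ (sig l (z.1.1 + z.2.1) η)‖₊ : ℝ≥0∞) := by
    intro z
    rw [hGdef]
    simp only [nnnorm_mul, nnnorm_eK', ENNReal.coe_mul, ENNReal.coe_one, one_mul, mul_one]
    ring
  have hGlint : ∫⁻ z, (‖G z‖₊ : ℝ≥0∞) ∂((volume : Measure (ℝ × ℝ)).prod volume) = M η := by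
    rw [hMdef]
    exact lintegral_congr hGnorm
  have hGint : Integrable G ((volume : Measure (ℝ × ℝ)).prod volume) :=
    ⟨hGmeas.stronglyMeasurable.aestronglyMeasurable,
      show (∫⁻ z, (‖G z‖₊ : ℝ≥0∞) ∂((volume : Measure (ℝ × ℝ)).prod volume)) < ∞ from
        hGlint ▸ hMη⟩
  -- per-q kernel
  have hKmeas : ∀ q : ℝ × ℝ, Measurable fun r : ℝ × ℝ =>
      (‖g₁ q‖₊ : ℝ≥0∞) * (‖g₂ r‖₊ : ℝ≥0∞) * (‖ψ (sig l (q.1 + r.1) η)‖₊ : ℝ≥0∞) := by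
    intro q
    refine (measurable_const.mul (hs₂.measurable.nnnorm.coe_nnreal_ennreal)).mul
      ((hsψ.measurable.comp (by unfold sig; fun_prop)).nnnorm.coe_nnreal_ennreal)
  have hHnorm : ∀ q p : ℝ × ℝ, (‖H (q, p)‖₊ : ℝ≥0∞)
      = ENNReal.ofReal (Real.exp (-(l * q.1))) *
        ((‖g₁ q‖₊ : ℝ≥0∞) * (‖g₂ (p.1 - q.1, (p.2 - q.2) * Real.exp (-(l * q.1)))‖₊ : ℝ≥0∞) *
          (‖ψ (sig l (q.1 + (p.1 - q.1)) η)‖₊ : ℝ≥0∞)) := by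
    intro q p
    rw [hHdef]
    simp only [Fc]
    rw [show q.1 + (p.1 - q.1) = p.1 by ring]
    simp only [nnnorm_mul, nnnorm_eK', ENNReal.coe_mul, ENNReal.coe_one, one_mul, mul_one]
    rw [enorm_exp_coe _ (Real.exp_pos _).le]
    ring
  have hHlint : ∫⁻ z, (‖H z‖₊ : ℝ≥0∞) ∂((volume : Measure (ℝ × ℝ)).prod volume) = M η := by
    have hHm : Measurable fun z : (ℝ × ℝ) × (ℝ × ℝ) => (‖H z‖₊ : ℝ≥0∞) :=
      hHmeas.nnnorm.coe_nnreal_ennreal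
    rw [lintegral_prod _ hHm.aemeasurable]
    have hMeq : M η = ∫⁻ q : ℝ × ℝ, ∫⁻ r : ℝ × ℝ,
        (‖g₁ q‖₊ : ℝ≥0∞) * (‖g₂ r‖₊ : ℝ≥0∞) * (‖ψ (sig l (q.1 + r.1) η)‖₊ : ℝ≥0∞)
        ∂volume ∂volume := by
      rw [hMdef]
      exact lintegral_prod _ (hjoint.comp measurable_prodMk_left).aemeasurable
    rw [hMeq]
    refine lintegral_congr fun q => ?_
    calc ∫⁻ p : ℝ × ℝ, (‖H (q, p)‖₊ : ℝ≥0∞) ∂volume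
        = ∫⁻ p : ℝ × ℝ, ENNReal.ofReal (Real.exp (-(l * q.1))) *
            ((fun r : ℝ × ℝ => (‖g₁ q‖₊ : ℝ≥0∞) * (‖g₂ r‖₊ : ℝ≥0∞) *
              (‖ψ (sig l (q.1 + r.1) η)‖₊ : ℝ≥0∞))
              (p.1 - q.1, (p.2 - q.2) * Real.exp (-(l * q.1)))) ∂volume := by
          refine lintegral_congr fun p => ?_
          exact hHnorm q p
      _ = ENNReal.ofReal (Real.exp (-(l * q.1))) *
            ∫⁻ p : ℝ × ℝ, ((fun r : ℝ × ℝ => (‖g₁ q‖₊ : ℝ≥0∞) * (‖g₂ r‖₊ : ℝ≥0∞) *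
              (‖ψ (sig l (q.1 + r.1) η)‖₊ : ℝ≥0∞))
              (p.1 - q.1, (p.2 - q.2) * Real.exp (-(l * q.1)))) ∂volume :=
          lintegral_const_mul _ ((hKmeas q).comp
            ((measurable_fst.sub_const _).prodMk ((measurable_snd.sub_const _).mul_const _)))
      _ = ENNReal.ofReal (Real.exp (-(l * q.1))) *
            (ENNReal.ofReal |(Real.exp (-(l * q.1)))⁻¹| *
              ∫⁻ r : ℝ × ℝ, (‖g₁ q‖₊ : ℝ≥0∞) * (‖g₂ r‖₊ : ℝ≥0∞) *
                (‖ψ (sig l (q.1 + r.1) η)‖₊ : ℝ≥0∞) ∂volume) := by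
          rw [lintegral_tau _ _ _ (Real.exp_ne_zero _) (hKmeas q)]
      _ = ∫⁻ r : ℝ × ℝ, (‖g₁ q‖₊ : ℝ≥0∞) * (‖g₂ r‖₊ : ℝ≥0∞) *
            (‖ψ (sig l (q.1 + r.1) η)‖₊ : ℝ≥0∞) ∂volume := by
          rw [← mul_assoc, abs_inv, abs_of_pos (Real.exp_pos _),
            ← Real.exp_neg, ← ENNReal.ofReal_mul (Real.exp_pos _).le, ← Real.exp_add]
          simp
  have hHint : Integrable H ((volume : Measure (ℝ × ℝ)).prod volume) :=
    ⟨hHmeas.stronglyMeasurable.aestronglyMeasurable,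
      show (∫⁻ z, (‖H z‖₊ : ℝ≥0∞) ∂((volume : Measure (ℝ × ℝ)).prod volume)) < ∞ from
        hHlint ▸ hMη⟩
  -- chain
  have hstep1 : Omega l g₁ (Omega l g₂ ψ) η = ∫ q : ℝ × ℝ, ∫ r : ℝ × ℝ, G (q, r) := by
    rw [Omega_eq]
    refine integral_congr_ae (Filter.Eventually.of_forall fun q => ?_)
    have hinner : Omega l g₂ ψ (sig l q.1 η)
        = ∫ r : ℝ × ℝ, g₂ r * eK r (sig l q.1 η) * ψ (sig l (q.1 + r.1) η) := by
      rw [Omega_eq]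
      exact integral_congr_ae (Filter.Eventually.of_forall fun r => by simp only [sig_sig])
    show g₁ q * eK q η * Omega l g₂ ψ (sig l q.1 η) = ∫ r : ℝ × ℝ, G (q, r)
    rw [hinner, ← MeasureTheory.integral_const_mul]
  have hstep2 : ∫ q : ℝ × ℝ, ∫ r : ℝ × ℝ, G (q, r) = ∫ z, G z
      ∂((volume : Measure (ℝ × ℝ)).prod volume) := by
    exact integral_integral hGint
  have hperq : ∀ q : ℝ × ℝ, (∫ r : ℝ × ℝ, G (q, r)) = ∫ p : ℝ × ℝ, H (q, p) := by
    intro q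
    have hGq : AEStronglyMeasurable (fun r : ℝ × ℝ => G (q, r)) (volume : Measure (ℝ × ℝ)) :=
      (hGmeas.comp measurable_prodMk_left).stronglyMeasurable.aestronglyMeasurable
    have hchg : (∫ p : ℝ × ℝ, G (q, (p.1 - q.1, (p.2 - q.2) * Real.exp (-(l * q.1)))))
        = |(Real.exp (-(l * q.1)))⁻¹| • ∫ r : ℝ × ℝ, G (q, r) :=
      integral_tau q.1 q.2 _ (Real.exp_ne_zero _) hGq
    have hHG : ∀ p : ℝ × ℝ, H (q, p) = (Real.exp (-(l * q.1))) •
        G (q, (p.1 - q.1, (p.2 - q.2) * Real.exp (-(l * q.1)))) := by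
      intro p
      rw [hHdef, hGdef]
      simp only [Fc]
      rw [show q.1 + (p.1 - q.1) = p.1 by ring]
      rw [← eK_mul l q p η, Complex.real_smul]
      ring
    calc ∫ r : ℝ × ℝ, G (q, r)
        = (Real.exp (-(l * q.1))) • (|(Real.exp (-(l * q.1)))⁻¹| • ∫ r : ℝ × ℝ, G (q, r)) := by
          rw [smul_smul, abs_inv, abs_of_pos (Real.exp_pos _),
            mul_inv_cancel₀ (Real.exp_ne_zero _), one_smul]
      _ = (Real.exp (-(l * q.1))) •
            ∫ p : ℝ × ℝ, G (q, (p.1 - q.1, (p.2 - q.2) * Real.exp (-(l * q.1)))) := by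
          rw [hchg]
      _ = ∫ p : ℝ × ℝ, (Real.exp (-(l * q.1))) •
            G (q, (p.1 - q.1, (p.2 - q.2) * Real.exp (-(l * q.1)))) := (integral_smul _ _).symm
      _ = ∫ p : ℝ × ℝ, H (q, p) :=
          integral_congr_ae (Filter.Eventually.of_forall fun p => (hHG p).symm)
  have hstep3 : (∫ z, G z ∂((volume : Measure (ℝ × ℝ)).prod volume))
      = ∫ z, H z ∂((volume : Measure (ℝ × ℝ)).prod volume) := by
    rw [integral_prod _ hGint, integral_prod _ hHint]
    exact integral_congr_ae (Filter.Eventually.of_forall fun q => hperq q)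
  have hstep4 : (∫ z, H z ∂((volume : Measure (ℝ × ℝ)).prod volume))
      = ∫ p : ℝ × ℝ, ∫ q : ℝ × ℝ, H (q, p) := by
    rw [integral_prod _ hHint]
    exact integral_integral_swap hHint
  have hstep5 : (∫ p : ℝ × ℝ, ∫ q : ℝ × ℝ, H (q, p)) = Omega l (tconv l g₁ g₂) ψ η := by
    rw [Omega_eq]
    refine integral_congr_ae (Filter.Eventually.of_forall fun p => ?_)
    show (∫ q : ℝ × ℝ, H (q, p)) = tconv l g₁ g₂ p * eK p η * ψ (sig l p.1 η)
    rw [tconv_eq]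
    have : ∀ q : ℝ × ℝ, H (q, p) = Fc l g₁ g₂ (q, p) * (eK p η * ψ (sig l p.1 η)) := by
      intro q; rw [hHdef]
    rw [integral_congr_ae (Filter.Eventually.of_forall this), MeasureTheory.integral_mul_const]
    ring
  exact hstep1.trans (hstep2.trans (hstep3.trans (hstep4.trans hstep5)))

end OmegaAux

namespace OmegaAux

lemma omega_congr_g (l : ℝ) {g g' ψ : ℝ × ℝ → ℂ}
    (h : g =ᵐ[(volume : Measure (ℝ × ℝ))] g') (η : ℝ × ℝ) :
    Omega l g ψ η = Omega l g' ψ η := by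
  rw [Omega_eq, Omega_eq]
  exact integral_congr_ae (h.mono fun p hp => by simp only [hp])

lemma omega_congr_psi (l : ℝ) {g ψ ψ' : ℝ × ℝ → ℂ} {ζ : ℝ × ℝ}
    (h : ∀ᵐ p : ℝ × ℝ ∂(volume : Measure (ℝ × ℝ)), ψ (sig l p.1 ζ) = ψ' (sig l p.1 ζ)) :
    Omega l g ψ ζ = Omega l g ψ' ζ := by
  rw [Omega_eq, Omega_eq]
  exact integral_congr_ae (h.mono fun p hp => by simp only [hp])

end OmegaAux


/-- For `g₁, g₂ ∈ L¹(ℝ²)`, the twisted convolution `g₁ ⋆ g₂` is in `L¹(ℝ²)` and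
`Ω(g₁)∘Ω(g₂) = Ω(g₁ ⋆ g₂)` as operators on `H_μ`: the quantization map is a
representation of the star-product algebra of κ-Minkowski. -/
theorem Omega_tconv (l : ℝ) (μ : Measure ℝ) [SigmaFinite μ]
    (g₁ g₂ : ℝ × ℝ → ℂ)
    (hg₁ : Integrable g₁ (volume : Measure (ℝ × ℝ)))
    (hg₂ : Integrable g₂ (volume : Measure (ℝ × ℝ))) :
    Integrable (tconv l g₁ g₂) (volume : Measure (ℝ × ℝ)) ∧
    ∀ ψ : ℝ × ℝ → ℂ, MemLp ψ 2 (Hmeas μ) →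
      Omega l g₁ (Omega l g₂ ψ) =ᵐ[Hmeas μ] Omega l (tconv l g₁ g₂) ψ := by
  constructor
  · exact OmegaAux.tconv_integrable l hg₁ hg₂
  · intro ψ hψ
    set G₁ := hg₁.1.mk g₁ with hG₁def
    set G₂ := hg₂.1.mk g₂ with hG₂def
    have hG₁ : g₁ =ᵐ[(volume : Measure (ℝ × ℝ))] G₁ := hg₁.1.ae_eq_mk
    have hG₂ : g₂ =ᵐ[(volume : Measure (ℝ × ℝ))] G₂ := hg₂.1.ae_eq_mk
    have sG₁ : StronglyMeasurable G₁ := hg₁.1.stronglyMeasurable_mk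
    have sG₂ : StronglyMeasurable G₂ := hg₂.1.stronglyMeasurable_mk
    set Ψ' := hψ.1.mk ψ with hΨdef
    have hΨ : ψ =ᵐ[Hmeas μ] Ψ' := hψ.1.ae_eq_mk
    have sΨ : StronglyMeasurable Ψ' := hψ.1.stronglyMeasurable_mk
    have hψ' : MemLp Ψ' 2 (Hmeas μ) := hψ.ae_eq hΨ
    set N := toMeasurable (Hmeas μ) {ζ | ψ ζ ≠ Ψ' ζ} with hNdef
    have hNm : MeasurableSet N := measurableSet_toMeasurable _ _
    have hN0 : Hmeas μ N = 0 := by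
      rw [hNdef, measure_toMeasurable]
      exact hΨ
    obtain ⟨B, hBm, hB0, hBprop⟩ := OmegaAux.badset l μ hNm hN0
    have hpsi_eq : ∀ (g : ℝ × ℝ → ℂ) (ζ : ℝ × ℝ), ζ ∉ B →
        Omega l g ψ ζ = Omega l g Ψ' ζ := by
      intro g ζ hζ
      refine OmegaAux.omega_congr_psi l (((hBprop ζ hζ)).mono fun p hp => ?_)
      by_contra hne
      exact hp (subset_toMeasurable _ _ hne)
    have hcore := OmegaAux.core l μ (hg₁.congr hG₁) (hg₂.congr hG₂) sG₁ sG₂ sΨ hψ'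
    have hML := OmegaAux.ML l μ hBm hB0
    have hBae : ∀ᵐ η ∂Hmeas μ, η ∉ B := measure_eq_zero_iff_ae_notMem.mp hB0
    filter_upwards [hcore, hML, hBae] with η hcoreη hMLη hηB
    have e1 : Omega l g₁ (Omega l g₂ ψ) η = Omega l G₁ (Omega l g₂ ψ) η :=
      OmegaAux.omega_congr_g l hG₁ η
    have e2 : Omega l G₁ (Omega l g₂ ψ) η = Omega l G₁ (Omega l G₂ Ψ') η := by
      rw [OmegaAux.Omega_eq, OmegaAux.Omega_eq]
      refine integral_congr_ae ?_
      filter_upwards [hMLη] with q hq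
      show G₁ q * OmegaAux.eK q η * Omega l g₂ ψ (OmegaAux.sig l q.1 η)
          = G₁ q * OmegaAux.eK q η * Omega l G₂ Ψ' (OmegaAux.sig l q.1 η)
      rw [hpsi_eq g₂ _ hq, OmegaAux.omega_congr_g l hG₂]
    have e4 : Omega l (tconv l G₁ G₂) Ψ' η = Omega l (tconv l g₁ g₂) Ψ' η :=
      OmegaAux.omega_congr_g l (OmegaAux.tconv_congr l hG₁.symm hG₂.symm) η
    have e5 : Omega l (tconv l g₁ g₂) Ψ' η = Omega l (tconv l g₁ g₂) ψ η :=
      (hpsi_eq _ η hηB).symm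
    exact (((e1.trans e2).trans hcoreη).trans e4).trans e5
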